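/- Let f : ℝ → ℝ be differentiable, and define the first divided difference f^{[1]}(x,y) = (f(x)−f(y))/(x−y) for x ≠ y and f^{[1]}(x,x) = f'(x). For Hermitian matrices A = Σᵢ λᵢ Pᵢ and B = Σⱼ μⱼ Qⱼ, the perturbation formula holds: f(A) − f(B) = Σᵢ Σⱼ f^{[1]}(λᵢ, μⱼ) Pᵢ (A − B) Qⱼ, i.e., f(A) − f(B) = T_{A,B,f^{[1]}}(A − B). -/

import Mathlib

open Matrix BigOperators

lemma vecMulVec_mul_vecMulVec' {n : ℕ} (a b c d : Fin n → ℂ) :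
    vecMulVec a b * vecMulVec c d = (b ⬝ᵥ c) • vecMulVec a d := by
  ext i j
  simp only [Matrix.mul_apply, vecMulVec_apply, Matrix.smul_apply, dotProduct, smul_eq_mul,
    Finset.sum_mul]
  exact Finset.sum_congr rfl fun k _ => by ring

lemma sum_proj_eq_one' {n : ℕ} (u : Fin n → Fin n → ℂ)
    (hu : ∀ i j, star (u i) ⬝ᵥ u j = if i = j then 1 else 0) :
    ∑ i, vecMulVec (u i) (star (u i)) = 1 := by
  set U : Matrix (Fin n) (Fin n) ℂ := Matrix.of u with hU
  have h1 : U * Uᴴ = 1 := by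
    ext i j
    have := hu j i
    simp only [dotProduct, Pi.star_apply] at this
    simp only [Matrix.mul_apply, Matrix.conjTranspose_apply, Matrix.one_apply, hU,
      Matrix.of_apply]
    rw [show (∑ k, u i k * star (u j k)) = ∑ k, star (u j k) * u i k from
      Finset.sum_congr rfl fun k _ => mul_comm _ _, this]
    by_cases h : i = j <;> simp [h, Ne.symm]
  have h2 : Uᴴ * U = 1 := mul_eq_one_comm.mp h1
  ext k l
  have h3 : (Uᴴ * U) l k = (1 : Matrix (Fin n) (Fin n) ℂ) l k := by rw [h2]
  simp only [Matrix.mul_apply, Matrix.conjTranspose_apply, Matrix.one_apply, hU,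
    Matrix.of_apply] at h3
  simp only [Finset.sum_apply, Matrix.sum_apply, vecMulVec_apply, Pi.star_apply,
    Matrix.one_apply]
  rw [show (∑ i, u i k * star (u i l)) = ∑ i, star (u i l) * u i k from
    Finset.sum_congr rfl fun i _ => mul_comm _ _, h3]
  by_cases h : k = l <;> simp [h, Ne.symm]

/-- Perturbation formula `f(A) - f(B) = T_{A,B,f^{[1]}}(A - B)`. -/
theorem dti_perturbation_formula {n : ℕ} (u v : Fin n → Fin n → ℂ) (lam mu : Fin n → ℝ)
    (hu : ∀ i j, star (u i) ⬝ᵥ u j = if i = j then 1 else 0)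
    (hv : ∀ i j, star (v i) ⬝ᵥ v j = if i = j then 1 else 0)
    (A B : Matrix (Fin n) (Fin n) ℂ)
    (hAH : A.IsHermitian) (hBH : B.IsHermitian)
    (hAdec : A = ∑ i, (lam i : ℂ) • vecMulVec (u i) (star (u i)))
    (hBdec : B = ∑ j, (mu j : ℂ) • vecMulVec (v j) (star (v j)))
    (f : ℝ → ℝ) (hf : Differentiable ℝ f)
    (f1 : ℝ → ℝ → ℝ)
    (hf1 : ∀ x y, f1 x y = if x = y then deriv f x else (f x - f y) / (x - y)) :
    (∑ i, (f (lam i) : ℂ) • vecMulVec (u i) (star (u i)))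
      - (∑ j, (f (mu j) : ℂ) • vecMulVec (v j) (star (v j)))
    = ∑ i, ∑ j, (f1 (lam i) (mu j) : ℂ) •
        (vecMulVec (u i) (star (u i)) * (A - B) * vecMulVec (v j) (star (v j))) := by
  set P : Fin n → Matrix (Fin n) (Fin n) ℂ := fun i => vecMulVec (u i) (star (u i)) with hP
  set Q : Fin n → Matrix (Fin n) (Fin n) ℂ := fun j => vecMulVec (v j) (star (v j)) with hQ
  have hPsum : ∑ i, P i = 1 := sum_proj_eq_one' u hu
  have hQsum : ∑ j, Q j = 1 := sum_proj_eq_one' v hv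
  have hPP : ∀ i k, P i * P k = if i = k then P i else 0 := by
    intro i k
    simp only [hP, vecMulVec_mul_vecMulVec', hu]
    by_cases h : i = k
    · subst h; simp
    · simp [h]
  have hQQ : ∀ k j, Q k * Q j = if k = j then Q j else 0 := by
    intro k j
    simp only [hQ, vecMulVec_mul_vecMulVec', hv]
    by_cases h : k = j
    · subst h; simp
    · simp [h]
  have hPA : ∀ i, P i * A = (lam i : ℂ) • P i := by
    intro i
    rw [hAdec, Finset.mul_sum]
    simp only [Matrix.mul_smul, hPP, smul_ite, smul_zero]
    simp
    simp [show ∀ x, vecMulVec (u x) (star (u x)) = P x from fun x => rfl, hPP]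
  have hBQ : ∀ j, B * Q j = (mu j : ℂ) • Q j := by
    intro j
    rw [hBdec, Finset.sum_mul]
    simp only [Matrix.smul_mul, hQQ, smul_ite, smul_zero]
    simp
    simp [show ∀ x, vecMulVec (v x) (star (v x)) = Q x from fun x => rfl, hQQ]
  have hmain : ∀ i j, P i * (A - B) * Q j = ((lam i : ℂ) - mu j) • (P i * Q j) := by
    intro i j
    calc P i * (A - B) * Q j = (P i * A) * Q j - P i * (B * Q j) := by
          rw [mul_sub, sub_mul, mul_assoc (P i) B (Q j)]
      _ = ((lam i : ℂ) • P i) * Q j - P i * ((mu j : ℂ) • Q j) := by rw [hPA, hBQ]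
      _ = ((lam i : ℂ) - (mu j : ℂ)) • (P i * Q j) := by
          rw [smul_mul_assoc, mul_smul_comm, sub_smul]
  have key : ∀ x y : ℝ, (f1 x y : ℂ) * ((x : ℂ) - y) = (f x : ℂ) - f y := by
    intro x y
    rw [hf1]
    by_cases h : x = y
    · simp [h]
    · rw [if_neg h]
      have hxy : (x : ℂ) - y ≠ 0 := by
        intro hc
        apply h
        have : (x : ℂ) = y := by linear_combination hc
        exact_mod_cast this
      push_cast
      field_simp
  have h4 : ∑ i, ∑ j, ((f (lam i) : ℂ) • (P i * Q j) - (f (mu j) : ℂ) • (P i * Q j))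
      = (∑ i, (f (lam i) : ℂ) • P i) - (∑ j, (f (mu j) : ℂ) • Q j) := by
    rw [Finset.sum_congr rfl (fun i _ => Finset.sum_sub_distrib _ _), Finset.sum_sub_distrib]
    congr 1
    · exact Finset.sum_congr rfl fun i _ => by
        rw [← Finset.smul_sum, ← Finset.mul_sum, hQsum, mul_one]
    · rw [Finset.sum_comm]
      exact Finset.sum_congr rfl fun j _ => by
        rw [← Finset.smul_sum, ← Finset.sum_mul, hPsum, one_mul]
  rw [← h4]
  refine Finset.sum_congr rfl fun i _ => Finset.sum_congr rfl fun j _ => ?_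
  rw [hmain, smul_smul, key, sub_smul]
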